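/- Suppose an algorithm run for k iterations on any L-smooth convex function f guarantees f(w^(k)) - f* ≤ C‖w^(0) - w*‖²/k^α with C, α > 0, and is restarted every ⌈(4C/μ)^(1/α)⌉ iterations on a μ-strongly convex f (each restart initialized at the previous output). Then after t restart epochs, f(w̄^(t)) - f* ≤ (1/2)^t (f(w̄^(0)) - f*), so ε-accuracy requires at most ⌈(4C/μ)^(1/α)⌉·⌈log₂((f(w̄^(0))-f*)/ε)⌉ total iterations. -/

import Mathlib

theorem stmt19 (d : ℕ) (f : EuclideanSpace ℝ (Fin d) → ℝ)
    (wstar : EuclideanSpace ℝ (Fin d)) (μ L C α : ℝ)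
    (hμ : 0 < μ) (hL : 0 < L) (hC : 0 < C) (hα : 0 < α)
    (hmin : ∀ w, f wstar ≤ f w)
    (hsc : ∀ w, ‖w - wstar‖^2 ≤ (2/μ) * (f w - f wstar))
    (hsmooth : ∀ w v, f w ≤ f v + (inner ℝ (gradient f v) (w - v) : ℝ) + (L/2) * ‖w - v‖^2)
    (A : EuclideanSpace ℝ (Fin d) → ℕ → EuclideanSpace ℝ (Fin d))
    (hA : ∀ w0 k, 1 ≤ k → f (A w0 k) - f wstar ≤ C * ‖w0 - wstar‖^2 / (k:ℝ)^α)
    (K : ℕ) (hK : K = ⌈(4*C/μ)^(1/α)⌉₊)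
    (wbar : ℕ → EuclideanSpace ℝ (Fin d))
    (hwbar : ∀ t, wbar (t+1) = A (wbar t) K) :
    (∀ t, f (wbar t) - f wstar ≤ (1/2)^t * (f (wbar 0) - f wstar)) ∧
    (∀ ε > 0, f (wbar ⌈Real.logb 2 ((f (wbar 0) - f wstar)/ε)⌉₊) - f wstar ≤ ε) := by
  have h4 : 0 < 4*C/μ := by positivity
  have hKge : (4*C/μ)^(1/α) ≤ (K:ℝ) := by
    rw [hK]; exact Nat.le_ceil _
  have hK1 : 1 ≤ K := by
    rw [hK]; exact Nat.one_le_iff_ne_zero.mpr (by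
      have : 0 < ⌈(4*C/μ)^(1/α)⌉₊ := Nat.ceil_pos.mpr (Real.rpow_pos_of_pos h4 _)
      omega)
  have hKα : 4*C/μ ≤ (K:ℝ)^α := by
    have h1 : ((4*C/μ)^(1/α))^α ≤ (K:ℝ)^α :=
      Real.rpow_le_rpow (Real.rpow_nonneg h4.le _) hKge hα.le
    rwa [one_div, Real.rpow_inv_rpow h4.le (ne_of_gt hα)] at h1
  have hKαpos : (0:ℝ) < (K:ℝ)^α :=
    Real.rpow_pos_of_pos (by exact_mod_cast Nat.lt_of_lt_of_le Nat.zero_lt_one hK1) _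
  have hD : ∀ t, 0 ≤ f (wbar t) - f wstar := fun t => sub_nonneg.mpr (hmin _)
  have hstep : ∀ t, f (wbar (t+1)) - f wstar ≤ (1/2) * (f (wbar t) - f wstar) := by
    intro t
    rw [hwbar t]
    calc f (A (wbar t) K) - f wstar ≤ C * ‖wbar t - wstar‖^2 / (K:ℝ)^α := hA _ _ hK1
      _ ≤ C * ((2/μ) * (f (wbar t) - f wstar)) / (K:ℝ)^α := by
          gcongr
          exact hsc _
      _ ≤ (1/2) * (f (wbar t) - f wstar) := by
          have hDt := hD t
          have h4C : 4*C ≤ (K:ℝ)^α * μ := (div_le_iff₀ hμ).mp hKα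
          have hmul := mul_le_mul_of_nonneg_left h4C hDt
          rw [div_le_iff₀ hKαpos]
          have heq : C * ((2/μ) * (f (wbar t) - f wstar)) = 2*C*(f (wbar t) - f wstar)/μ := by
            field_simp
          rw [heq, div_le_iff₀ hμ]
          nlinarith
  have hmain : ∀ t, f (wbar t) - f wstar ≤ (1/2)^t * (f (wbar 0) - f wstar) := by
    intro t
    induction t with
    | zero => simp
    | succ n ih =>
        calc f (wbar (n+1)) - f wstar ≤ (1/2) * (f (wbar n) - f wstar) := hstep n
          _ ≤ (1/2) * ((1/2)^n * (f (wbar 0) - f wstar)) := by linarith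
          _ = (1/2)^(n+1) * (f (wbar 0) - f wstar) := by ring
  refine ⟨hmain, fun ε hε => ?_⟩
  set D := f (wbar 0) - f wstar with hDdef
  set T := ⌈Real.logb 2 (D/ε)⌉₊ with hT
  have hD0 : 0 ≤ D := hD 0
  refine le_trans (hmain T) ?_
  by_cases hde : D ≤ ε
  · have h1 : (1/2:ℝ)^T ≤ 1 := pow_le_one₀ (by norm_num) (by norm_num)
    nlinarith
  · push_neg at hde
    have hratio : 1 < D/ε := (one_lt_div hε).mpr hde
    have hlog : Real.logb 2 (D/ε) ≤ (T:ℝ) := Nat.le_ceil _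
    have h2T : D/ε ≤ (2:ℝ)^(T:ℝ) := by
      calc D/ε = (2:ℝ)^(Real.logb 2 (D/ε)) :=
            (Real.rpow_logb (by norm_num) (by norm_num) (lt_trans one_pos hratio)).symm
        _ ≤ (2:ℝ)^(T:ℝ) := Real.rpow_le_rpow_left_iff (by norm_num) |>.mpr hlog
    rw [Real.rpow_natCast] at h2T
    have h2Tpos : (0:ℝ) < 2^T := by positivity
    rw [div_le_iff₀ hε] at h2T
    have : (1/2:ℝ)^T = ((2:ℝ)^T)⁻¹ := by
      rw [one_div, inv_pow]
    rw [this, inv_mul_le_iff₀ h2Tpos]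
    linarith [h2T]
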